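/- arXiv:1504.02718 — 2 statements merged into one kernel-verified Lean document; each statement's English description precedes it below -/
import Mathlib

section
/- Let n be a natural number, let c₁,…,cₙ be positive real numbers, and let λ₁,…,λₙ be nonnegative real numbers with λ₁ + ⋯ + λₙ = 1. Then the limit as x tends to 0 from the right of ln(∑_{k=1}^n λₖcₖ^x)/x equals ∑_{k=1}^n λₖ ln cₖ. -/
open Filter Topology

/-- `lim_{x→0⁺} ln(∑ λₖ cₖ^x)/x = ∑ λₖ ln cₖ` for positive `cₖ` and weights summing to 1. -/
theorem tendsto_log_sum_rpow_div
    (n : ℕ) (c lam : Fin n → ℝ) (hc : ∀ k, 0 < c k) (hlam : ∀ k, 0 ≤ lam k)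
    (hsum : (∑ k, lam k) = 1) :
    Tendsto (fun x : ℝ => Real.log (∑ k, lam k * c k ^ x) / x)
      (𝓝[>] 0) (𝓝 (∑ k, lam k * Real.log (c k))) := by
  have hs0 : (∑ k, lam k * c k ^ (0:ℝ)) = 1 := by
    simp only [Real.rpow_zero, mul_one]; exact hsum
  have hsumD : HasDerivAt (fun x : ℝ => ∑ k, lam k * c k ^ x)
      (∑ k, lam k * Real.log (c k)) 0 := by
    have : HasDerivAt (fun x : ℝ => ∑ k, lam k * c k ^ x)
        (∑ k, lam k * ((c k) ^ (0:ℝ) * Real.log (c k))) 0 := by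
      apply HasDerivAt.fun_sum
      intro k _
      exact ((Real.hasStrictDerivAt_const_rpow (hc k) 0).hasDerivAt).const_mul (lam k)
    simpa [Real.rpow_zero] using this
  have hlog : HasDerivAt (fun x : ℝ => Real.log (∑ k, lam k * c k ^ x))
      (∑ k, lam k * Real.log (c k)) 0 := by
    have := hsumD.log (by rw [hs0]; norm_num)
    simpa [hsum] using this
  have := hlog.tendsto_slope_zero_right
  simpa [hsum, Real.log_one, sub_zero, mul_comm, div_eq_mul_inv] using this
end

section
/- Let n be a natural number, let c₁,…,cₙ be positive real numbers, and let λ₁,…,λₙ be nonnegative real numbers with λ₁ + ⋯ + λₙ = 1. Then the limit as x tends to 0 from the right of (∑_{k=1}^n λₖcₖ^x)^{1/x} equals ∏_{k=1}^n cₖ^{λₖ}. -/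
open Filter Topology

/-- `lim_{x→0⁺} (∑ λₖ cₖ^x)^{1/x} = ∏ cₖ^{λₖ}` for positive `cₖ` and weights summing to 1. -/
theorem tendsto_power_mean_geometric_mean
    (n : ℕ) (c lam : Fin n → ℝ) (hc : ∀ k, 0 < c k) (hlam : ∀ k, 0 ≤ lam k)
    (hsum : (∑ k, lam k) = 1) :
    Tendsto (fun x : ℝ => (∑ k, lam k * c k ^ x) ^ (1 / x))
      (𝓝[>] 0) (𝓝 (∏ k, c k ^ lam k)) := by
  set S : ℝ → ℝ := fun x => ∑ k, lam k * c k ^ x with hSdef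
  obtain ⟨k₀, hk₀⟩ : ∃ k, 0 < lam k := by
    by_contra h
    push_neg at h
    have : (∑ k, lam k) = 0 :=
      Finset.sum_eq_zero fun k _ => le_antisymm (h k) (hlam k)
    simp [this] at hsum
  have hSpos : ∀ x : ℝ, 0 < S x := fun x =>
    Finset.sum_pos'
      (fun j _ => mul_nonneg (hlam j) (Real.rpow_pos_of_pos (hc j) x).le)
      ⟨k₀, Finset.mem_univ k₀, mul_pos hk₀ (Real.rpow_pos_of_pos (hc k₀) x)⟩
  have hS0 : S 0 = 1 := by simp [hSdef, hsum]
  set L : ℝ := ∑ k, lam k * Real.log (c k) with hL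
  have hderivS : HasDerivAt S L 0 := by
    have : HasDerivAt S (∑ k, lam k * (c k ^ (0:ℝ) * Real.log (c k))) 0 := by
      apply HasDerivAt.fun_sum
      intro k _
      exact ((Real.hasStrictDerivAt_const_rpow (hc k) 0).hasDerivAt).const_mul (lam k)
    simpa [Real.rpow_zero] using this
  have hderiv : HasDerivAt (fun x => Real.log (S x)) L 0 := by
    have := hderivS.log (by rw [hS0]; norm_num)
    simpa [hS0] using this
  have hslope : Tendsto (fun x : ℝ => Real.log (S x) / x) (𝓝[>] 0) (𝓝 L) := by
    have h := (hasDerivAt_iff_tendsto_slope.mp hderiv).mono_left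
      (nhdsWithin_mono 0 (fun x hx => ne_of_gt hx : Set.Ioi (0:ℝ) ⊆ {0}ᶜ))
    refine h.congr (fun x => ?_)
    simp [slope_def_field, hS0, div_eq_mul_inv, mul_comm]
  have hexp : Tendsto (fun x : ℝ => Real.exp (Real.log (S x) / x)) (𝓝[>] 0)
      (𝓝 (Real.exp L)) := (Real.continuous_exp.tendsto L).comp hslope
  have hprod : Real.exp L = ∏ k, c k ^ lam k := by
    rw [hL, Real.exp_sum]
    exact Finset.prod_congr rfl fun k _ => by
      rw [mul_comm, Real.exp_mul, Real.exp_log (hc k)]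
  rw [← hprod]
  refine hexp.congr' ?_
  filter_upwards [self_mem_nhdsWithin] with x hx
  rw [Real.rpow_def_of_pos (hSpos x)]
  ring_nf
end
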